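/- Any 2-Euclidean election admits a nice 2-Euclidean embedding, i.e., a 2-Euclidean embedding in which no three voters are embedded on a common line and no two perpendicular bisectors between distinct pairs of candidates are parallel. -/

import Mathlib

noncomputable section

abbrev Plane : Type := EuclideanSpace ℝ (Fin 2)

namespace Stmt3Aux

/-- planar cross product -/
def ncross (x y : Plane) : ℝ := x 0 * y 1 - x 1 * y 0

/-- rotation by 90 degrees -/
def rot (m : Plane) : Plane := (WithLp.equiv 2 (Fin 2 → ℝ)).symm ![-(m 1), m 0]

lemma rot0 (m : Plane) : rot m 0 = -(m 1) := by simp [rot]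
lemma rot1 (m : Plane) : rot m 1 = m 0 := by simp [rot]

lemma ncross_rot_ne (m : Plane) (hm : m ≠ 0) : ncross m (rot m) ≠ 0 := by
  have h : ncross m (rot m) = m 0 * m 0 + m 1 * m 1 := by
    simp [ncross, rot0, rot1]
  rw [h]
  have h2 : m 0 ≠ 0 ∨ m 1 ≠ 0 := by
    by_contra hcon
    push_neg at hcon
    apply hm
    ext i
    fin_cases i
    · simpa using hcon.1
    · simpa using hcon.2
  rcases h2 with h2 | h2 <;>
    nlinarith [mul_self_nonneg (m 0), mul_self_nonneg (m 1), mul_self_pos.mpr h2]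

lemma ncross_rot_ne' (m : Plane) (hm : m ≠ 0) : ncross (rot m) m ≠ 0 := by
  have h : ncross (rot m) m = -(ncross m (rot m)) := by simp [ncross]; ring
  rw [h]
  exact neg_ne_zero.mpr (ncross_rot_ne m hm)

lemma ncross_smul_left (r : ℝ) (x y : Plane) : ncross (r • x) y = r * ncross x y := by
  simp [ncross]; ring

lemma ncross_self (x : Plane) : ncross x x = 0 := by simp [ncross]; ring

lemma ncross_collinear {p q r : Plane} (h : Collinear ℝ ({p, q, r} : Set Plane)) :
    ncross (q - p) (r - p) = 0 := by
  obtain ⟨d, hd⟩ := (collinear_iff_of_mem (Set.mem_insert p _)).mp h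
  obtain ⟨tq, hq⟩ := hd q (by simp)
  obtain ⟨tr, hr⟩ := hd r (by simp)
  rw [hq, hr]
  simp [ncross]; ring

section upd

variable {ι : Type*} [DecidableEq ι]

lemma upd_p (γ : ι → Plane) {p q r s : ι}
    (hq : q ≠ p) (hr : r ≠ p) (hs : s ≠ p) (t : ℝ) (e : Plane) :
    ncross (Function.update γ p (γ p + t • e) p - Function.update γ p (γ p + t • e) q)
      (Function.update γ p (γ p + t • e) r - Function.update γ p (γ p + t • e) s) =
      ncross (γ p - γ q) (γ r - γ s) + t * ncross e (γ r - γ s) := by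
  simp only [Function.update_self, Function.update_of_ne hq, Function.update_of_ne hr,
    Function.update_of_ne hs]
  simp [ncross]; ring

lemma upd_q (γ : ι → Plane) {p q r s : ι}
    (hp : p ≠ q) (hr : r ≠ q) (hs : s ≠ q) (t : ℝ) (e : Plane) :
    ncross (Function.update γ q (γ q + t • e) p - Function.update γ q (γ q + t • e) q)
      (Function.update γ q (γ q + t • e) r - Function.update γ q (γ q + t • e) s) =
      ncross (γ p - γ q) (γ r - γ s) + t * (-(ncross e (γ r - γ s))) := by
  simp only [Function.update_self, Function.update_of_ne hp, Function.update_of_ne hr,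
    Function.update_of_ne hs]
  simp [ncross]; ring

lemma upd_r (γ : ι → Plane) {p q r s : ι}
    (hp : p ≠ r) (hq : q ≠ r) (hs : s ≠ r) (t : ℝ) (e : Plane) :
    ncross (Function.update γ r (γ r + t • e) p - Function.update γ r (γ r + t • e) q)
      (Function.update γ r (γ r + t • e) r - Function.update γ r (γ r + t • e) s) =
      ncross (γ p - γ q) (γ r - γ s) + t * ncross (γ p - γ q) e := by
  simp only [Function.update_self, Function.update_of_ne hp, Function.update_of_ne hq,
    Function.update_of_ne hs]
  simp [ncross]; ring

lemma upd_s (γ : ι → Plane) {p q r s : ι}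
    (hp : p ≠ s) (hq : q ≠ s) (hr : r ≠ s) (t : ℝ) (e : Plane) :
    ncross (Function.update γ s (γ s + t • e) p - Function.update γ s (γ s + t • e) q)
      (Function.update γ s (γ s + t • e) r - Function.update γ s (γ s + t • e) s) =
      ncross (γ p - γ q) (γ r - γ s) + t * (-(ncross (γ p - γ q) e)) := by
  simp only [Function.update_self, Function.update_of_ne hp, Function.update_of_ne hq,
    Function.update_of_ne hr]
  simp [ncross]; ring

end upd

/-- Perturbation core: if a function is affine with nonzero slope along a coordinate
direction, it can be made nonzero by an arbitrarily small perturbation. -/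
lemma dense_core {ι : Type*} [Fintype ι] [DecidableEq ι] (f : (ι → Plane) → ℝ)
    (γ : ι → Plane) (i : ι) (e : Plane) (c : ℝ) (hc : c ≠ 0)
    (hf : ∀ t : ℝ, f (Function.update γ i (γ i + t • e)) = f γ + t * c)
    {ε : ℝ} (hε : 0 < ε) : ∃ γ', dist γ' γ < ε ∧ f γ' ≠ 0 := by
  have hne : ‖e‖ + 1 ≠ 0 := by positivity
  set δ := ε / (‖e‖ + 1) with hδdef
  have hδpos : 0 < δ := by positivity
  have hδe : δ * ‖e‖ < ε := by
    have h1 : δ * ‖e‖ < δ * (‖e‖ + 1) := by nlinarith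
    have h2 : δ * (‖e‖ + 1) = ε := div_mul_cancel₀ ε hne
    linarith
  have hdist : ∀ t : ℝ, |t| = δ → dist (Function.update γ i (γ i + t • e)) γ < ε := by
    intro t ht
    rw [dist_pi_lt_iff hε]
    intro b
    rcases eq_or_ne b i with rfl | hb
    · rw [Function.update_self, dist_eq_norm, add_sub_cancel_left, norm_smul,
        Real.norm_eq_abs, ht]
      exact hδe
    · rw [Function.update_of_ne hb]
      simpa using hε
  rcases ne_or_eq (f γ + δ * c) 0 with h | h
  · exact ⟨_, hdist δ (abs_of_pos hδpos), by rw [hf]; exact h⟩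
  · refine ⟨_, hdist (-δ) (by rw [abs_neg]; exact abs_of_pos hδpos), ?_⟩
    rw [hf]
    intro h2
    apply hc
    have h3 : δ * c = 0 := by linarith
    rcases mul_eq_zero.mp h3 with h4 | h4
    · exact absurd h4 (ne_of_gt hδpos)
    · exact h4

variable {C V : Type*}

/-- test function for voter collinearity -/
def Fv (u w z : V) (γ : C ⊕ V → Plane) : ℝ :=
  ncross (γ (Sum.inr w) - γ (Sum.inr u)) (γ (Sum.inr z) - γ (Sum.inr u))

/-- test function for parallel bisectors -/
def Fc (a b c d : C) (γ : C ⊕ V → Plane) : ℝ :=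
  ncross (γ (Sum.inl c) - γ (Sum.inl d)) (γ (Sum.inl a) - γ (Sum.inl b))

lemma Fv_cont (u w z : V) : Continuous (Fv (C := C) u w z) := by
  unfold Fv ncross
  fun_prop

lemma Fc_cont (a b c d : C) : Continuous (Fc (V := V) a b c d) := by
  unfold Fc ncross
  fun_prop

lemma inr_ne {x y : V} (h : x ≠ y) : (Sum.inr x : C ⊕ V) ≠ Sum.inr y :=
  fun he => h (Sum.inr.inj he)

lemma inl_ne {x y : C} (h : x ≠ y) : (Sum.inl x : C ⊕ V) ≠ Sum.inl y :=
  fun he => h (Sum.inl.inj he)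

lemma Fv_dense [Fintype C] [Fintype V] (u w z : V)
    (huw : u ≠ w) (huz : u ≠ z) (hwz : w ≠ z)
    (γ : C ⊕ V → Plane) (hinj : Function.Injective γ) {ε : ℝ} (hε : 0 < ε) :
    ∃ γ', dist γ' γ < ε ∧ Fv u w z γ' ≠ 0 := by
  classical
  set m : Plane := γ (Sum.inr w) - γ (Sum.inr u) with hm
  have hm0 : m ≠ 0 := sub_ne_zero.mpr (hinj.ne (inr_ne huw.symm))
  refine dense_core (Fv u w z) γ (Sum.inr z) (rot m) (ncross m (rot m))
    (ncross_rot_ne m hm0) ?_ hε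
  intro t
  exact upd_r γ (inr_ne hwz) (inr_ne huz) (inr_ne huz) t (rot m)

lemma Fc_dense [Fintype C] [Fintype V] (a b c d : C)
    (hab : a ≠ b) (hcd : c ≠ d) (hset : ({a, b} : Set C) ≠ {c, d})
    (γ : C ⊕ V → Plane) (hinj : Function.Injective γ) {ε : ℝ} (hε : 0 < ε) :
    ∃ γ', dist γ' γ < ε ∧ Fc a b c d γ' ≠ 0 := by
  classical
  have hcase : (c ≠ a ∧ c ≠ b) ∨ (d ≠ a ∧ d ≠ b) ∨ (a ≠ c ∧ a ≠ d) ∨ (b ≠ c ∧ b ≠ d) := by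
    by_contra hcon
    push_neg at hcon
    obtain ⟨h1, h2, h3, h4⟩ := hcon
    apply hset
    ext x
    simp only [Set.mem_insert_iff, Set.mem_singleton_iff]
    constructor <;> intro hx <;> rcases hx with rfl | rfl <;> tauto
  set mab : Plane := γ (Sum.inl a) - γ (Sum.inl b) with hmab
  set ncd : Plane := γ (Sum.inl c) - γ (Sum.inl d) with hncd
  have hmab0 : mab ≠ 0 := sub_ne_zero.mpr (hinj.ne (inl_ne hab))
  have hncd0 : ncd ≠ 0 := sub_ne_zero.mpr (hinj.ne (inl_ne hcd))
  rcases hcase with ⟨h1, h2⟩ | ⟨h1, h2⟩ | ⟨h1, h2⟩ | ⟨h1, h2⟩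
  · refine dense_core (Fc a b c d) γ (Sum.inl c) (rot mab) (ncross (rot mab) mab)
      (ncross_rot_ne' mab hmab0) ?_ hε
    intro t
    exact upd_p γ (inl_ne hcd.symm) (inl_ne h1.symm) (inl_ne h2.symm) t (rot mab)
  · refine dense_core (Fc a b c d) γ (Sum.inl d) (rot mab) (-(ncross (rot mab) mab))
      (neg_ne_zero.mpr (ncross_rot_ne' mab hmab0)) ?_ hε
    intro t
    exact upd_q γ (inl_ne hcd) (inl_ne h1.symm) (inl_ne h2.symm) t (rot mab)
  · refine dense_core (Fc a b c d) γ (Sum.inl a) (rot ncd) (ncross ncd (rot ncd))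
      (ncross_rot_ne ncd hncd0) ?_ hε
    intro t
    exact upd_r γ (inl_ne h1.symm) (inl_ne h2.symm) (inl_ne hab.symm) t (rot ncd)
  · refine dense_core (Fc a b c d) γ (Sum.inl b) (rot ncd) (-(ncross ncd (rot ncd)))
      (neg_ne_zero.mpr (ncross_rot_ne ncd hncd0)) ?_ hε
    intro t
    exact upd_s γ (inl_ne h1.symm) (inl_ne h2.symm) (inl_ne hab) t (rot ncd)

variable (pref : V → C → C → Prop)

/-- the (open) set of valid embeddings -/
def goodSet : Set ((C ⊕ V) → Plane) :=
  {γ | (∀ p : (C ⊕ V) × (C ⊕ V), p.1 ≠ p.2 → γ p.1 ≠ γ p.2) ∧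
    ∀ x : V × C × C, pref x.1 x.2.1 x.2.2 →
      dist (γ (Sum.inr x.1)) (γ (Sum.inl x.2.1)) < dist (γ (Sum.inr x.1)) (γ (Sum.inl x.2.2))}

lemma goodSet_open [Fintype C] [Fintype V] : IsOpen (goodSet pref) := by
  classical
  have heq : goodSet pref =
      (⋂ p : (C ⊕ V) × (C ⊕ V), {γ : (C ⊕ V) → Plane | p.1 ≠ p.2 → γ p.1 ≠ γ p.2}) ∩
      (⋂ x : V × C × C, {γ : (C ⊕ V) → Plane | pref x.1 x.2.1 x.2.2 →
        dist (γ (Sum.inr x.1)) (γ (Sum.inl x.2.1)) <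
          dist (γ (Sum.inr x.1)) (γ (Sum.inl x.2.2))}) := by
    ext γ
    simp only [goodSet, Set.mem_setOf_eq, Set.mem_inter_iff, Set.mem_iInter]
  rw [heq]
  refine (isOpen_iInter_of_finite fun p => ?_).inter (isOpen_iInter_of_finite fun x => ?_)
  · by_cases hp : p.1 = p.2
    · have h2 : {γ : (C ⊕ V) → Plane | p.1 ≠ p.2 → γ p.1 ≠ γ p.2} = Set.univ := by
        ext γ; simp [hp]
      rw [h2]; exact isOpen_univ
    · have h2 : {γ : (C ⊕ V) → Plane | p.1 ≠ p.2 → γ p.1 ≠ γ p.2} = {γ | γ p.1 ≠ γ p.2} := by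
        ext γ; simp [hp]
      rw [h2]; exact isOpen_ne_fun (continuous_apply _) (continuous_apply _)
  · by_cases hx : pref x.1 x.2.1 x.2.2
    · have h2 : {γ : (C ⊕ V) → Plane | pref x.1 x.2.1 x.2.2 →
          dist (γ (Sum.inr x.1)) (γ (Sum.inl x.2.1)) <
            dist (γ (Sum.inr x.1)) (γ (Sum.inl x.2.2))} =
          {γ | dist (γ (Sum.inr x.1)) (γ (Sum.inl x.2.1)) <
            dist (γ (Sum.inr x.1)) (γ (Sum.inl x.2.2))} := by
        ext γ; simp [hx]
      rw [h2]; exact isOpen_lt (by fun_prop) (by fun_prop)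
    · have h2 : {γ : (C ⊕ V) → Plane | pref x.1 x.2.1 x.2.2 →
          dist (γ (Sum.inr x.1)) (γ (Sum.inl x.2.1)) <
            dist (γ (Sum.inr x.1)) (γ (Sum.inl x.2.2))} = Set.univ := by
        ext γ; simp [hx]
      rw [h2]; exact isOpen_univ

end Stmt3Aux

open Stmt3Aux in
/-- any 2-Euclidean election admits a nice 2-Euclidean embedding:
one in which no three voters are collinear and no two perpendicular bisectors between
distinct pairs of candidates are parallel. -/
theorem stmt_3 {C V : Type*} [Fintype C] [Fintype V]
    (pref : V → C → C → Prop) (hord : ∀ v : V, IsStrictTotalOrder C (pref v))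
    (heuc : ∃ γ : C ⊕ V → Plane, Function.Injective γ ∧
      ∀ (v : V) (a b : C), pref v a b →
        dist (γ (Sum.inr v)) (γ (Sum.inl a)) < dist (γ (Sum.inr v)) (γ (Sum.inl b))) :
    ∃ γ : C ⊕ V → Plane, Function.Injective γ ∧
      (∀ (v : V) (a b : C), pref v a b →
        dist (γ (Sum.inr v)) (γ (Sum.inl a)) < dist (γ (Sum.inr v)) (γ (Sum.inl b))) ∧
      (∀ u w z : V, u ≠ w → u ≠ z → w ≠ z →
        ¬ Collinear ℝ ({γ (Sum.inr u), γ (Sum.inr w), γ (Sum.inr z)} : Set Plane)) ∧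
      (∀ a b c d : C, a ≠ b → c ≠ d → ({a, b} : Set C) ≠ ({c, d} : Set C) →
        ∀ r : ℝ, γ (Sum.inl c) - γ (Sum.inl d) ≠ r • (γ (Sum.inl a) - γ (Sum.inl b))) := by
  classical
  obtain ⟨γ₀, hinj₀, hpref₀⟩ := heuc
  set U : Set ((C ⊕ V) → Plane) := goodSet pref with hUdef
  have hUinj : ∀ γ ∈ U, Function.Injective γ := by
    intro γ hγ x y hxy
    by_contra hne
    exact hγ.1 (x, y) hne hxy
  have hU0 : γ₀ ∈ U := ⟨fun p hp => hinj₀.ne hp, fun x hx => hpref₀ _ _ _ hx⟩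
  have hUopen : IsOpen U := goodSet_open pref
  let I := ({x : V × V × V // x.1 ≠ x.2.1 ∧ x.1 ≠ x.2.2 ∧ x.2.1 ≠ x.2.2}) ⊕
      ({y : C × C × C × C // y.1 ≠ y.2.1 ∧ y.2.2.1 ≠ y.2.2.2 ∧
        ({y.1, y.2.1} : Set C) ≠ {y.2.2.1, y.2.2.2}})
  let F : I → ((C ⊕ V) → Plane) → ℝ :=
    Sum.elim (fun x => Fv x.1.1 x.1.2.1 x.1.2.2)
      (fun y => Fc y.1.1 y.1.2.1 y.1.2.2.1 y.1.2.2.2)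
  have hFcont : ∀ i, Continuous (F i) := by
    rintro (x | y)
    · exact Fv_cont _ _ _
    · exact Fc_cont _ _ _ _
  have hFdense : ∀ i : I, ∀ γ ∈ U, ∀ ε : ℝ, 0 < ε →
      ∃ γ', dist γ' γ < ε ∧ F i γ' ≠ 0 := by
    rintro (⟨⟨u, w, z⟩, huw, huz, hwz⟩ | ⟨⟨a, b, c, d⟩, hab, hcd, hset⟩) γ hγ ε hε
    · exact Fv_dense u w z huw huz hwz γ (hUinj γ hγ) hε
    · exact Fc_dense a b c d hab hcd hset γ (hUinj γ hγ) hε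
  let D : I → Set ((C ⊕ V) → Plane) := fun i => {γ | F i γ ≠ 0} ∪ (closure U)ᶜ
  have hDopen : ∀ i, IsOpen (D i) := fun i =>
    (isOpen_ne_fun (hFcont i) continuous_const).union isClosed_closure.isOpen_compl
  have hDdense : ∀ i, Dense (D i) := by
    intro i x
    by_cases hx : x ∈ closure U
    · have h1 : U ⊆ closure {γ | F i γ ≠ 0} := by
        intro γ hγ
        rw [Metric.mem_closure_iff]
        intro ε hε
        obtain ⟨γ', hd, hne⟩ := hFdense i γ hγ ε hε
        exact ⟨γ', hne, by rwa [dist_comm]⟩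
      exact closure_mono Set.subset_union_left ((closure_minimal h1 isClosed_closure) hx)
    · exact subset_closure (Set.mem_union_right _ hx)
  have hdense : Dense (⋂ i, D i) := dense_iInter_of_isOpen hDopen hDdense
  obtain ⟨γ, hγU, hγD⟩ := hdense.inter_open_nonempty U hUopen ⟨γ₀, hU0⟩
  have hFne : ∀ i : I, F i γ ≠ 0 := by
    intro i
    rcases Set.mem_iInter.mp hγD i with h | h
    · exact h
    · exact absurd (subset_closure hγU) h
  refine ⟨γ, hUinj γ hγU, fun v a b h => hγU.2 (v, a, b) h, ?_, ?_⟩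
  · intro u w z huw huz hwz hcol
    exact hFne (Sum.inl ⟨(u, w, z), huw, huz, hwz⟩) (ncross_collinear hcol)
  · intro a b c d hab hcd hset r hr
    apply hFne (Sum.inr ⟨(a, b, c, d), hab, hcd, hset⟩)
    show ncross (γ (Sum.inl c) - γ (Sum.inl d)) (γ (Sum.inl a) - γ (Sum.inl b)) = 0
    rw [hr, ncross_smul_left, ncross_self, mul_zero]

end
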